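/- Let N be a positive integer, χ a Dirichlet character modulo N, k a positive integer, and a : ℕ → ℂ a function with a(1) = 1. Then the following are equivalent: (i) for all positive integers m, n, a(m)·a(n) = ∑_{d | gcd(m,n)} χ(d) d^{k-1} a(mn/d²); (ii) for all positive integers m, n, a(mn) = ∑_{d | gcd(m,n)} μ(d) χ(d) d^{k-1} a(m/d) a(n/d), where μ is the Möbius function. -/
import Mathlib

open Finset

lemma moebius_sum_complex (c : ℕ) :
    (∑ d ∈ c.divisors, ((ArithmeticFunction.moebius d : ℤ) : ℂ)) = if c = 1 then 1 else 0 := by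
  have h : ((ArithmeticFunction.moebius : ArithmeticFunction ℂ) *
      (ArithmeticFunction.zeta : ArithmeticFunction ℂ)) c = (1 : ArithmeticFunction ℂ) c := by
    rw [ArithmeticFunction.coe_moebius_mul_coe_zeta]
  rwa [ArithmeticFunction.coe_mul_zeta_apply, ArithmeticFunction.one_apply] at h

lemma gcd_div_div' {d m n : ℕ} (hm : d ∣ m) (hn : d ∣ n) :
    Nat.gcd (m / d) (n / d) = Nat.gcd m n / d := by
  rcases Nat.eq_zero_or_pos d with rfl | hd
  · simp
  · conv_rhs => rw [← Nat.div_mul_cancel hm, ← Nat.div_mul_cancel hn]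
    rw [Nat.gcd_mul_right, Nat.mul_div_cancel _ hd]

lemma double_sum_swap (g : ℕ) (hg : g ≠ 0) (F : ℕ → ℕ → ℂ) :
    ∑ d ∈ g.divisors, ∑ e ∈ (g / d).divisors, F d e
      = ∑ c ∈ g.divisors, ∑ d ∈ c.divisors, F d (c / d) := by
  rw [Finset.sum_sigma', Finset.sum_sigma']
  apply Finset.sum_nbij' (i := fun p => ⟨p.1 * p.2, p.1⟩) (j := fun p => ⟨p.2, p.1 / p.2⟩)
  · rintro ⟨d, e⟩ hp
    simp only [Finset.mem_sigma, Nat.mem_divisors] at hp ⊢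
    obtain ⟨⟨hd, -⟩, he, hgd⟩ := hp
    have hd0 : d ≠ 0 := by rintro rfl; simp at hgd
    have he0 : e ≠ 0 := by rintro rfl; exact hgd.elim (zero_dvd_iff.mp he)
    exact ⟨⟨(Nat.dvd_div_iff_mul_dvd hd).mp he, hg⟩, Dvd.intro e rfl, mul_ne_zero hd0 he0⟩
  · rintro ⟨c, d⟩ hp
    simp only [Finset.mem_sigma, Nat.mem_divisors] at hp ⊢
    obtain ⟨⟨hc, -⟩, hd, hc0⟩ := hp
    obtain ⟨t, rfl⟩ := hd
    obtain ⟨s, rfl⟩ := hc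
    have hd0 : d ≠ 0 := by rintro rfl; simp at hc0
    refine ⟨⟨⟨t * s, by ring⟩, hg⟩, ?_, ?_⟩
    · rw [Nat.mul_div_cancel_left _ (Nat.pos_of_ne_zero hd0), mul_assoc,
        Nat.mul_div_cancel_left _ (Nat.pos_of_ne_zero hd0)]
      exact Dvd.intro s rfl
    · rw [mul_assoc, Nat.mul_div_cancel_left _ (Nat.pos_of_ne_zero hd0)]
      rintro h
      exact hg (by rw [mul_assoc, h, mul_zero])
  · rintro ⟨d, e⟩ hp
    simp only [Finset.mem_sigma, Nat.mem_divisors] at hp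
    have hd0 : d ≠ 0 := by
      rintro rfl; exact hp.2.2 (Nat.div_zero g)
    simp [Nat.mul_div_cancel_left _ (Nat.pos_of_ne_zero hd0)]
  · rintro ⟨c, d⟩ hp
    simp only [Finset.mem_sigma, Nat.mem_divisors] at hp
    simp [Nat.mul_div_cancel' hp.2.1]
  · rintro ⟨d, e⟩ hp
    simp only [Finset.mem_sigma, Nat.mem_divisors] at hp
    have hd0 : d ≠ 0 := by
      rintro rfl; exact hp.2.2 (Nat.div_zero g)
    simp [Nat.mul_div_cancel_left _ (Nat.pos_of_ne_zero hd0)]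

theorem stmt_3 (N : ℕ) (hN : 0 < N) (χ : DirichletCharacter ℂ N) (k : ℕ) (hk : 0 < k)
    (a : ℕ → ℂ) (ha : a 1 = 1) :
    (∀ m n : ℕ, 0 < m → 0 < n →
        a m * a n = ∑ d ∈ (Nat.gcd m n).divisors,
          χ (d : ZMod N) * (d : ℂ)^(k-1) * a (m * n / d^2))
    ↔ (∀ m n : ℕ, 0 < m → 0 < n →
        a (m*n) = ∑ d ∈ (Nat.gcd m n).divisors,
          ((ArithmeticFunction.moebius d : ℤ) : ℂ) * χ (d : ZMod N) * (d : ℂ)^(k-1) *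
            a (m/d) * a (n/d)) := by
  constructor
  · intro h m n hm hn
    have hg : Nat.gcd m n ≠ 0 := (Nat.gcd_pos_of_pos_left n hm).ne'
    have step : ∀ d ∈ (Nat.gcd m n).divisors,
        ((ArithmeticFunction.moebius d : ℤ) : ℂ) * χ (d : ZMod N) * (d : ℂ)^(k-1) *
            a (m/d) * a (n/d)
          = ∑ e ∈ (Nat.gcd m n / d).divisors,
              ((ArithmeticFunction.moebius d : ℤ) : ℂ) * χ (d : ZMod N) * (d : ℂ)^(k-1) *
                (χ (e : ZMod N) * (e : ℂ)^(k-1) * a (m * n / (d * e)^2)) := by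
      intro d hd
      rw [Nat.mem_divisors] at hd
      obtain ⟨hd, -⟩ := hd
      have hdm : d ∣ m := hd.trans (Nat.gcd_dvd_left m n)
      have hdn : d ∣ n := hd.trans (Nat.gcd_dvd_right m n)
      have hd0 : 0 < d := Nat.pos_of_dvd_of_pos hdm hm
      have key := h (m / d) (n / d) (Nat.div_pos (Nat.le_of_dvd hm hdm) hd0)
        (Nat.div_pos (Nat.le_of_dvd hn hdn) hd0)
      rw [gcd_div_div' hdm hdn] at key
      rw [mul_assoc _ (a (m/d)) (a (n/d)), key, Finset.mul_sum]
      refine Finset.sum_congr rfl fun e he => ?_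
      congr 2
      rw [Nat.div_mul_div_comm hdm hdn, Nat.div_div_eq_div_mul]
      congr 1
      ring_nf
    rw [Finset.sum_congr rfl step, double_sum_swap _ hg]
    have step2 : ∀ c ∈ (Nat.gcd m n).divisors,
        (∑ d ∈ c.divisors,
          ((ArithmeticFunction.moebius d : ℤ) : ℂ) * χ (d : ZMod N) * (d : ℂ)^(k-1) *
            (χ ((c/d : ℕ) : ZMod N) * ((c/d : ℕ) : ℂ)^(k-1) * a (m * n / (d * (c/d))^2)))
          = (χ (c : ZMod N) * (c : ℂ)^(k-1) * a (m * n / c^2)) *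
              ∑ d ∈ c.divisors, ((ArithmeticFunction.moebius d : ℤ) : ℂ) := by
      intro c hc
      rw [Nat.mem_divisors] at hc
      rw [Finset.mul_sum]
      refine Finset.sum_congr rfl fun d hd => ?_
      rw [Nat.mem_divisors] at hd
      have hcd : d * (c / d) = c := Nat.mul_div_cancel' hd.1
      have hcast : ((d : ℂ) * ((c/d : ℕ) : ℂ)) = (c : ℂ) := by
        rw [← Nat.cast_mul, hcd]
      have hchi : χ (d : ZMod N) * χ ((c/d : ℕ) : ZMod N) = χ (c : ZMod N) := by
        rw [← map_mul, ← Nat.cast_mul, hcd]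
      rw [hcd, ← hchi, ← hcast, mul_pow]
      ring
    rw [Finset.sum_congr rfl step2]
    simp only [moebius_sum_complex, mul_ite, mul_one, mul_zero]
    rw [Finset.sum_ite_eq' _ 1]
    simp [Nat.one_mem_divisors.mpr hg, ha]
  · intro h m n hm hn
    have hg : Nat.gcd m n ≠ 0 := (Nat.gcd_pos_of_pos_left n hm).ne'
    have step : ∀ d ∈ (Nat.gcd m n).divisors,
        χ (d : ZMod N) * (d : ℂ)^(k-1) * a (m * n / d^2)
          = ∑ e ∈ (Nat.gcd m n / d).divisors,
              χ (d : ZMod N) * (d : ℂ)^(k-1) *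
                (((ArithmeticFunction.moebius e : ℤ) : ℂ) * χ (e : ZMod N) * (e : ℂ)^(k-1) *
                  a (m / (d * e)) * a (n / (d * e))) := by
      intro d hd
      rw [Nat.mem_divisors] at hd
      obtain ⟨hd, -⟩ := hd
      have hdm : d ∣ m := hd.trans (Nat.gcd_dvd_left m n)
      have hdn : d ∣ n := hd.trans (Nat.gcd_dvd_right m n)
      have hd0 : 0 < d := Nat.pos_of_dvd_of_pos hdm hm
      have key := h (m / d) (n / d) (Nat.div_pos (Nat.le_of_dvd hm hdm) hd0)
        (Nat.div_pos (Nat.le_of_dvd hn hdn) hd0)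
      rw [gcd_div_div' hdm hdn] at key
      have : m * n / d^2 = m / d * (n / d) := by
        rw [Nat.div_mul_div_comm hdm hdn, pow_two]
      rw [this, key, Finset.mul_sum]
      refine Finset.sum_congr rfl fun e he => ?_
      rw [Nat.div_div_eq_div_mul, Nat.div_div_eq_div_mul]
    rw [Finset.sum_congr rfl step, double_sum_swap _ hg]
    have step2 : ∀ c ∈ (Nat.gcd m n).divisors,
        (∑ d ∈ c.divisors,
          χ (d : ZMod N) * (d : ℂ)^(k-1) *
            (((ArithmeticFunction.moebius (c/d) : ℤ) : ℂ) * χ ((c/d : ℕ) : ZMod N) *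
              ((c/d : ℕ) : ℂ)^(k-1) * a (m / (d * (c/d))) * a (n / (d * (c/d)))))
          = (χ (c : ZMod N) * (c : ℂ)^(k-1) * a (m / c) * a (n / c)) *
              ∑ d ∈ c.divisors, ((ArithmeticFunction.moebius (c/d) : ℤ) : ℂ) := by
      intro c hc
      rw [Finset.mul_sum]
      refine Finset.sum_congr rfl fun d hd => ?_
      rw [Nat.mem_divisors] at hd
      have hcd : d * (c / d) = c := Nat.mul_div_cancel' hd.1
      have hcast : ((d : ℂ) * ((c/d : ℕ) : ℂ)) = (c : ℂ) := by
        rw [← Nat.cast_mul, hcd]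
      have hchi : χ (d : ZMod N) * χ ((c/d : ℕ) : ZMod N) = χ (c : ZMod N) := by
        rw [← map_mul, ← Nat.cast_mul, hcd]
      rw [hcd, ← hchi, ← hcast, mul_pow]
      ring
    rw [Finset.sum_congr rfl step2]
    symm
    have step3 : ∀ c ∈ (Nat.gcd m n).divisors,
        (∑ d ∈ c.divisors, ((ArithmeticFunction.moebius (c/d) : ℤ) : ℂ))
          = if c = 1 then 1 else 0 := by
      intro c hc
      rw [Nat.sum_div_divisors c (fun d => ((ArithmeticFunction.moebius d : ℤ) : ℂ)),
        moebius_sum_complex]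
    calc ∑ c ∈ (Nat.gcd m n).divisors,
          (χ (c : ZMod N) * (c : ℂ)^(k-1) * a (m / c) * a (n / c)) *
            ∑ d ∈ c.divisors, ((ArithmeticFunction.moebius (c/d) : ℤ) : ℂ)
        = ∑ c ∈ (Nat.gcd m n).divisors,
            (χ (c : ZMod N) * (c : ℂ)^(k-1) * a (m / c) * a (n / c)) *
              (if c = 1 then 1 else 0) := Finset.sum_congr rfl fun c hc => by
                rw [step3 c hc]
      _ = a m * a n := by
            simp only [mul_ite, mul_one, mul_zero]
            rw [Finset.sum_ite_eq' _ 1]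
            simp [Nat.one_mem_divisors.mpr hg, ha]
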